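/- Let A be a Morse matching on the Taylor graph of a monomial ideal I such that the set A_+ of sources is closed under taking supersets (within subsets of G(I)). Then the induced subcomplex J = ⊕_{V ∈ A_+} (0 → Q e_V → Q ∂(e_V) → 0) of the Taylor resolution T is a dg ideal of T, i.e., T·J ⊆ J and ∂(J) ⊆ J. -/

import Mathlib

open Finset

/-- `σ(V,W) = |{(v,w) ∈ V × W : v > w}|`. -/
def sigmaCount {ι : Type*} [LinearOrder ι] (V W : Finset ι) : ℕ :=
  ((V ×ˢ W).filter fun p => p.2 < p.1).card

/-- The Taylor (Gemeda) product of basis elements of the Taylor complex. -/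
noncomputable def taylorMul (k : Type*) [Field k] {ι σ₀ : Type*} [LinearOrder ι]
    (u : ι → (σ₀ →₀ ℕ)) (V W : Finset ι) :
    Finset ι →₀ MvPolynomial σ₀ k :=
  if Disjoint V W then
    Finsupp.single (V ∪ W)
      ((-1 : MvPolynomial σ₀ k) ^ sigmaCount V W *
        MvPolynomial.monomial (V.sup u + W.sup u - (V ∪ W).sup u) 1)
  else 0

/-- Bilinear extension of the Taylor product to the whole Taylor complex. -/
noncomputable def taylorProd (k : Type*) [Field k] {ι σ₀ : Type*} [LinearOrder ι]
    (u : ι → (σ₀ →₀ ℕ)) (x y : Finset ι →₀ MvPolynomial σ₀ k) :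
    Finset ι →₀ MvPolynomial σ₀ k :=
  x.sum fun V cV => y.sum fun W cW => (cV * cW) • taylorMul k u V W

/-- The Taylor differential on a basis element. -/
noncomputable def taylorD (k : Type*) [Field k] {ι σ₀ : Type*} [LinearOrder ι]
    (u : ι → (σ₀ →₀ ℕ)) (U : Finset ι) :
    Finset ι →₀ MvPolynomial σ₀ k :=
  ∑ v ∈ U,
    ((-1 : MvPolynomial σ₀ k) ^ ((U.filter fun w => w < v).card)) •
      Finsupp.single (U.erase v)
        (MvPolynomial.monomial (U.sup u - (U.erase v).sup u) 1)

/-- Linear extension of the Taylor differential. -/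
noncomputable def taylorDiff (k : Type*) [Field k] {ι σ₀ : Type*} [LinearOrder ι]
    (u : ι → (σ₀ →₀ ℕ)) (x : Finset ι →₀ MvPolynomial σ₀ k) :
    Finset ι →₀ MvPolynomial σ₀ k :=
  x.sum fun U c => c • taylorD k u U

section Alg
variable (k : Type*) [Field k] {ι σ₀ : Type*} [LinearOrder ι] (u : ι → (σ₀ →₀ ℕ))

lemma taylorDiff_single (U : Finset ι) (c : MvPolynomial σ₀ k) :
    taylorDiff k u (Finsupp.single U c) = c • taylorD k u U := by
  unfold taylorDiff
  rw [Finsupp.sum_single_index]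
  simp

lemma taylorDiff_zero : taylorDiff k u 0 = 0 := Finsupp.sum_zero_index

lemma taylorDiff_add (x y : Finset ι →₀ MvPolynomial σ₀ k) :
    taylorDiff k u (x + y) = taylorDiff k u x + taylorDiff k u y := by
  unfold taylorDiff
  exact Finsupp.sum_add_index' (fun a => zero_smul _ _) (fun a b₁ b₂ => add_smul _ _ _)

lemma taylorDiff_smul (a : MvPolynomial σ₀ k) (x : Finset ι →₀ MvPolynomial σ₀ k) :
    taylorDiff k u (a • x) = a • taylorDiff k u x := by
  unfold taylorDiff
  rw [Finsupp.sum_smul_index (fun i => by simp), Finsupp.smul_sum]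
  exact Finsupp.sum_congr fun U hU => mul_smul a (x U) (taylorD k u U)

lemma taylorDiff_finset_sum {α : Type*} (s : Finset α)
    (f : α → (Finset ι →₀ MvPolynomial σ₀ k)) :
    taylorDiff k u (∑ i ∈ s, f i) = ∑ i ∈ s, taylorDiff k u (f i) := by
  classical
  induction s using Finset.induction_on with
  | empty => simp [taylorDiff_zero]
  | insert _ _ h ih => rw [Finset.sum_insert h, Finset.sum_insert h, taylorDiff_add, ih]

lemma taylorProd_single_left (W : Finset ι) (c : MvPolynomial σ₀ k)
    (y : Finset ι →₀ MvPolynomial σ₀ k) :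
    taylorProd k u (Finsupp.single W c) y
      = y.sum fun B d => (c * d) • taylorMul k u W B := by
  unfold taylorProd
  rw [Finsupp.sum_single_index]
  simp [Finsupp.sum]

lemma taylorProd_single_single (A B : Finset ι) (a b : MvPolynomial σ₀ k) :
    taylorProd k u (Finsupp.single A a) (Finsupp.single B b)
      = (a * b) • taylorMul k u A B := by
  rw [taylorProd_single_left, Finsupp.sum_single_index]
  simp

lemma taylorProd_single_right (x : Finset ι →₀ MvPolynomial σ₀ k)
    (W : Finset ι) (c : MvPolynomial σ₀ k) :
    taylorProd k u x (Finsupp.single W c)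
      = x.sum fun A a => (a * c) • taylorMul k u A W := by
  unfold taylorProd
  apply Finsupp.sum_congr
  intro A _
  rw [Finsupp.sum_single_index]
  simp

lemma taylorProd_zero_right (x : Finset ι →₀ MvPolynomial σ₀ k) :
    taylorProd k u x 0 = 0 := by
  unfold taylorProd
  simp [Finsupp.sum_zero_index, Finsupp.sum]

lemma taylorProd_zero_left (y : Finset ι →₀ MvPolynomial σ₀ k) :
    taylorProd k u 0 y = 0 := Finsupp.sum_zero_index

lemma taylorProd_add_right (x y z : Finset ι →₀ MvPolynomial σ₀ k) :
    taylorProd k u x (y + z) = taylorProd k u x y + taylorProd k u x z := by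
  unfold taylorProd
  rw [← Finsupp.sum_add]
  apply Finsupp.sum_congr
  intro A _
  exact Finsupp.sum_add_index' (fun a => by simp) (fun a b₁ b₂ => by rw [mul_add, add_smul])

lemma taylorProd_add_left (x y z : Finset ι →₀ MvPolynomial σ₀ k) :
    taylorProd k u (x + y) z = taylorProd k u x z + taylorProd k u y z := by
  unfold taylorProd
  exact Finsupp.sum_add_index' (fun a => by simp [Finsupp.sum])
    (fun a b₁ b₂ => by
      rw [← Finsupp.sum_add]
      apply Finsupp.sum_congr
      intro B _
      rw [add_mul, add_smul])

lemma taylorProd_smul_right (a : MvPolynomial σ₀ k) (x y : Finset ι →₀ MvPolynomial σ₀ k) :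
    taylorProd k u x (a • y) = a • taylorProd k u x y := by
  unfold taylorProd
  rw [Finsupp.smul_sum]
  apply Finsupp.sum_congr
  intro A _
  rw [Finsupp.sum_smul_index (fun i => by simp), Finsupp.smul_sum]
  apply Finsupp.sum_congr
  intro B _
  rw [smul_smul]
  congr 1
  ring

lemma taylorProd_smul_left (a : MvPolynomial σ₀ k) (x y : Finset ι →₀ MvPolynomial σ₀ k) :
    taylorProd k u (a • x) y = a • taylorProd k u x y := by
  unfold taylorProd
  rw [Finsupp.sum_smul_index (fun i => by simp [Finsupp.sum]), Finsupp.smul_sum]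
  apply Finsupp.sum_congr
  intro A _
  rw [Finsupp.smul_sum]
  apply Finsupp.sum_congr
  intro B _
  rw [← mul_smul, mul_assoc]

lemma taylorProd_finset_sum_right {α : Type*} (s : Finset α)
    (x : Finset ι →₀ MvPolynomial σ₀ k) (f : α → (Finset ι →₀ MvPolynomial σ₀ k)) :
    taylorProd k u x (∑ i ∈ s, f i) = ∑ i ∈ s, taylorProd k u x (f i) := by
  classical
  induction s using Finset.induction_on with
  | empty => simp [taylorProd_zero_right]
  | insert _ _ h ih => rw [Finset.sum_insert h, Finset.sum_insert h, taylorProd_add_right, ih]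

lemma taylorProd_finset_sum_left {α : Type*} (s : Finset α)
    (f : α → (Finset ι →₀ MvPolynomial σ₀ k)) (y : Finset ι →₀ MvPolynomial σ₀ k) :
    taylorProd k u (∑ i ∈ s, f i) y = ∑ i ∈ s, taylorProd k u (f i) y := by
  classical
  induction s using Finset.induction_on with
  | empty => simp [taylorProd_zero_left]
  | insert _ _ h ih => rw [Finset.sum_insert h, Finset.sum_insert h, taylorProd_add_left, ih]

lemma taylorProd_eq_sum_left (x y : Finset ι →₀ MvPolynomial σ₀ k) :
    taylorProd k u x y = x.sum fun V c => taylorProd k u (Finsupp.single V c) y := by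
  unfold taylorProd
  apply Finsupp.sum_congr
  intro V _
  rw [Finsupp.sum_single_index]
  simp [Finsupp.sum]

lemma taylorProd_eq_sum_right (x y : Finset ι →₀ MvPolynomial σ₀ k) :
    taylorProd k u x y = y.sum fun W d => taylorProd k u x (Finsupp.single W d) := by
  unfold taylorProd
  rw [Finsupp.sum_comm]
  apply Finsupp.sum_congr
  intro W _
  apply Finsupp.sum_congr
  intro V _
  rw [Finsupp.sum_single_index]
  simp
end Alg

section D2
variable (k : Type*) [Field k] {ι σ₀ : Type*} [LinearOrder ι] (u : ι → (σ₀ →₀ ℕ))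

lemma tsub_lemma1 {a b c : σ₀ →₀ ℕ} (h1 : c ≤ b) (h2 : b ≤ a) :
    (a - b) + (b - c) = a - c := by
  ext s
  have t1 := Finsupp.le_def.mp h1 s
  have t2 := Finsupp.le_def.mp h2 s
  simp only [Finsupp.add_apply, Finsupp.tsub_apply] at t1 t2 ⊢
  omega

lemma neg_one_pow_succ_eq {R : Type*} [CommRing R] {a b : ℕ} (h : a = b + 1) :
    (-1 : R) ^ a = -(-1 : R) ^ b := by
  rw [h, pow_succ]; ring

lemma monomial_one_mul (s t : σ₀ →₀ ℕ) :
    (MvPolynomial.monomial s (1:k)) * (MvPolynomial.monomial t (1:k))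
      = MvPolynomial.monomial (s + t) 1 := by
  rw [MvPolynomial.monomial_mul, one_mul]

lemma d_squared (U : Finset ι) : taylorDiff k u (taylorD k u U) = 0 := by
  classical
  set R := MvPolynomial σ₀ k
  set F : ι → ι → (Finset ι →₀ R) := fun v w =>
    Finsupp.single ((U.erase v).erase w)
      ((-1 : R) ^ ((U.filter fun x => x < v).card + ((U.erase v).filter fun x => x < w).card) *
        MvPolynomial.monomial
          ((U.sup u - (U.erase v).sup u) + ((U.erase v).sup u - ((U.erase v).erase w).sup u)) 1)
    with hF
  have step : ∀ v ∈ U,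
      taylorDiff k u ((-1 : R) ^ ((U.filter fun w => w < v).card) •
        Finsupp.single (U.erase v)
          (MvPolynomial.monomial (U.sup u - (U.erase v).sup u) 1))
      = ∑ w ∈ U.erase v, F v w := by
    intro v hv
    rw [taylorDiff_smul, taylorDiff_single, taylorD, Finset.smul_sum, Finset.smul_sum]
    apply Finset.sum_congr rfl
    intro w hw
    simp only [hF]
    simp only [smul_smul, Finsupp.smul_single', mul_one]
    congr 1
    rw [pow_add, ← monomial_one_mul]
    ring
  rw [taylorD, taylorDiff_finset_sum, Finset.sum_congr rfl step]
  -- now: ∑ v ∈ U, ∑ w ∈ U.erase v, F v w = 0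
  have hconv : ∀ v, (∑ w ∈ U.erase v, F v w) = ∑ w ∈ U, if w ≠ v then F v w else 0 := by
    intro v
    rw [Finset.sum_ite, Finset.sum_const_zero, add_zero, Finset.filter_ne']
  rw [Finset.sum_congr rfl fun v _ => hconv v]
  rw [← Finset.sum_product']
  -- antisymmetry
  have hkey : ∀ v ∈ U, ∀ w ∈ U, w < v → F v w = - F w v := by
    intro v hv w hw hlt
    simp only [hF]
    have hidx : (U.erase v).erase w = (U.erase w).erase v := Finset.erase_right_comm
    have hexp : (U.sup u - (U.erase v).sup u) + ((U.erase v).sup u - ((U.erase v).erase w).sup u)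
        = (U.sup u - (U.erase w).sup u) + ((U.erase w).sup u - ((U.erase w).erase v).sup u) := by
      rw [tsub_lemma1 (Finset.sup_mono (Finset.erase_subset _ _))
            (Finset.sup_mono (Finset.erase_subset _ _)),
          tsub_lemma1 (Finset.sup_mono (Finset.erase_subset _ _))
            (Finset.sup_mono (Finset.erase_subset _ _)), hidx]
    have hf1 : ((U.erase v).filter fun x => x < w).card = (U.filter fun x => x < w).card := by
      rw [Finset.filter_erase, Finset.erase_eq_of_notMem]
      simp only [Finset.mem_filter, not_and]
      intro _
      exact not_lt.mpr hlt.le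
    have hwmem : w ∈ U.filter fun x => x < v := Finset.mem_filter.mpr ⟨hw, hlt⟩
    have hf2 : ((U.erase w).filter fun x => x < v).card = (U.filter fun x => x < v).card - 1 := by
      rw [Finset.filter_erase, Finset.card_erase_of_mem hwmem]
    have hpos : 1 ≤ (U.filter fun x => x < v).card :=
      Finset.card_pos.mpr ⟨w, hwmem⟩
    have hsg : (-1 : R) ^ ((U.filter fun x => x < v).card + ((U.erase v).filter fun x => x < w).card)
        = -(-1 : R) ^ ((U.filter fun x => x < w).card + ((U.erase w).filter fun x => x < v).card) := by
      apply neg_one_pow_succ_eq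
      rw [hf1, hf2]
      omega
    rw [hexp, hsg, hidx, ← Finsupp.single_neg]
    congr 1
    ring
  apply Finset.sum_involution (fun p _ => (p.2, p.1))
  · intro p hp
    by_cases hvw : p.2 = p.1
    · simp [hvw]
    · have h1 : (if p.2 ≠ p.1 then F p.1 p.2 else 0) = F p.1 p.2 := if_pos hvw
      have h2 : (if p.1 ≠ p.2 then F p.2 p.1 else 0) = F p.2 p.1 := if_pos (Ne.symm hvw)
      simp only [h1, h2]
      have hp1 : p.1 ∈ U := (Finset.mem_product.mp hp).1
      have hp2 : p.2 ∈ U := (Finset.mem_product.mp hp).2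
      rcases lt_trichotomy p.1 p.2 with h | h | h
      · rw [hkey p.2 hp2 p.1 hp1 h]; exact add_neg_cancel _
      · exact absurd h.symm hvw
      · rw [hkey p.1 hp1 p.2 hp2 h]; exact neg_add_cancel _
  · intro p hp hne
    intro hc
    apply hne
    by_cases hvw : p.2 = p.1
    · simp [hvw]
    · exact absurd (congrArg Prod.fst hc) (by simpa using hvw)
  · intro p hp
    exact Finset.mem_product.mpr ⟨(Finset.mem_product.mp hp).2, (Finset.mem_product.mp hp).1⟩
  · intro p hp
    rfl

end D2

section Comb
variable {ι : Type*} [LinearOrder ι]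

lemma sigma_snd (W V : Finset ι) :
    sigmaCount W V = ∑ x ∈ V, (W.filter fun w => x < w).card := by
  unfold sigmaCount
  rw [Finset.card_filter, Finset.sum_product, Finset.sum_comm]
  exact Finset.sum_congr rfl fun x _ => (Finset.card_filter _ _).symm

lemma sigma_fst (V W : Finset ι) :
    sigmaCount V W = ∑ x ∈ V, (W.filter fun w => w < x).card := by
  unfold sigmaCount
  rw [Finset.card_filter, Finset.sum_product]
  exact Finset.sum_congr rfl fun x _ => (Finset.card_filter _ _).symm

lemma sigma_snd_erase {W V : Finset ι} {v : ι} (hv : v ∈ V) :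
    sigmaCount W V = sigmaCount W (V.erase v) + (W.filter fun w => v < w).card := by
  rw [sigma_snd, sigma_snd, ← Finset.sum_erase_add _ _ hv]

lemma sigma_fst_erase {V W : Finset ι} {v : ι} (hv : v ∈ V) :
    sigmaCount V W = sigmaCount (V.erase v) W + (W.filter fun w => w < v).card := by
  rw [sigma_fst, sigma_fst, ← Finset.sum_erase_add _ _ hv]

lemma filter_lt_gt_card {W : Finset ι} {v : ι} (hv : v ∉ W) :
    (W.filter fun w => w < v).card + (W.filter fun w => v < w).card = W.card := by
  have h := Finset.card_filter_add_card_filter_not (s := W) (p := fun w => w < v)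
  have h2 : W.filter (fun w => ¬ w < v) = W.filter fun w => v < w := by
    apply Finset.filter_congr
    intro w hw
    simp only [not_lt]
    constructor
    · intro h; exact lt_of_le_of_ne h (fun he => hv (he ▸ hw))
    · exact le_of_lt
  rw [h2] at h
  exact h

lemma filter_lt_union_card {W V : Finset ι} (hd : Disjoint W V) (v : ι) :
    ((W ∪ V).filter fun w => w < v).card
      = (W.filter fun w => w < v).card + (V.filter fun w => w < v).card := by
  rw [Finset.filter_union, Finset.card_union_of_disjoint]
  exact hd.mono (Finset.filter_subset _ _) (Finset.filter_subset _ _)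

lemma union_erase_eq {W V : Finset ι} {v : ι} (hvW : v ∉ W) :
    W ∪ V.erase v = (W ∪ V).erase v := by
  rw [Finset.erase_union_distrib, Finset.erase_eq_of_notMem hvW]

lemma sign_left {W V : Finset ι} (hd : Disjoint W V) {v : ι} (hv : v ∈ V) :
    W.card + sigmaCount W V + ((W ∪ V).filter fun w => w < v).card
      = sigmaCount W (V.erase v) + (V.filter fun w => w < v).card + 2 * W.card := by
  have hvW : v ∉ W := fun h => (Finset.disjoint_left.mp hd h) hv
  have c1 := sigma_snd_erase (W := W) hv
  have c2 := filter_lt_union_card hd v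
  have c3 := filter_lt_gt_card hvW
  omega

lemma sign_right {W V : Finset ι} (hd : Disjoint W V) {v : ι} (hv : v ∈ V) :
    sigmaCount V W + ((W ∪ V).filter fun w => w < v).card
      = sigmaCount (V.erase v) W + (V.filter fun w => w < v).card
        + 2 * (W.filter fun w => w < v).card := by
  have c1 := sigma_fst_erase (W := W) hv
  have c2 := filter_lt_union_card hd v
  omega

end Comb

lemma exp_left {σ₀ : Type*} {x y y' d d' : σ₀ →₀ ℕ} (h1 : y' ≤ y) (h2 : d' ≤ x + y')
    (h3 : d ≤ x + y) (h4 : d' ≤ d) :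
    (y - y') + (x + y' - d') = (x + y - d) + (d - d') := by
  ext s
  have t1 := Finsupp.le_def.mp h1 s
  have t2 := Finsupp.le_def.mp h2 s
  have t3 := Finsupp.le_def.mp h3 s
  have t4 := Finsupp.le_def.mp h4 s
  simp only [Finsupp.add_apply, Finsupp.tsub_apply] at t1 t2 t3 t4 ⊢
  omega

lemma exp_right {σ₀ : Type*} {x y y' d d' : σ₀ →₀ ℕ} (h1 : y' ≤ y) (h2 : d' ≤ x + y')
    (h3 : d ≤ x + y) (h4 : d' ≤ d) :
    (y - y') + (y' + x - d') = (x + y - d) + (d - d') := by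
  ext s
  have t1 := Finsupp.le_def.mp h1 s
  have t2 := Finsupp.le_def.mp h2 s
  have t3 := Finsupp.le_def.mp h3 s
  have t4 := Finsupp.le_def.mp h4 s
  simp only [Finsupp.add_apply, Finsupp.tsub_apply] at t1 t2 t3 t4 ⊢
  omega

lemma neg_one_pow_eq {R : Type*} [CommRing R] {a b n : ℕ} (h : a = b + 2 * n) :
    (-1 : R) ^ a = (-1 : R) ^ b := by
  rw [h, pow_add, pow_mul, neg_one_sq, one_pow, mul_one]

section Leib
variable (k : Type*) [Field k] {ι σ₀ : Type*} [LinearOrder ι] (u : ι → (σ₀ →₀ ℕ))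

lemma leibniz_left (W V : Finset ι) (c : MvPolynomial σ₀ k) (hd : Disjoint W V) :
    (((-1 : MvPolynomial σ₀ k) ^ (W.card + sigmaCount W V) *
        MvPolynomial.monomial (W.sup u + V.sup u - (W ∪ V).sup u) (1 : k)) * c) •
        taylorD k u (W ∪ V)
    = taylorProd k u (Finsupp.single W c) (taylorD k u V)
      + ∑ w ∈ W,
          ((((-1 : MvPolynomial σ₀ k) ^ (W.card + sigmaCount W V) *
              MvPolynomial.monomial (W.sup u + V.sup u - (W ∪ V).sup u) (1 : k)) * c) *
            ((-1 : MvPolynomial σ₀ k) ^ (((W ∪ V).filter fun x => x < w).card) *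
              MvPolynomial.monomial ((W ∪ V).sup u - ((W ∪ V).erase w).sup u) (1 : k))) •
            Finsupp.single ((W ∪ V).erase w) (1 : MvPolynomial σ₀ k) := by
  classical
  rw [taylorD, taylorD, taylorProd_finset_sum_right, Finset.smul_sum, Finset.sum_union hd,
    add_comm]
  congr 1
  · -- V part
    apply Finset.sum_congr rfl
    intro v hv
    have hvW : v ∉ W := fun h => (Finset.disjoint_left.mp hd h) hv
    rw [taylorProd_smul_right, taylorProd_single_single, taylorMul,
      if_pos (hd.mono_right (Finset.erase_subset _ _)), union_erase_eq hvW]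
    simp only [smul_smul, Finsupp.smul_single']
    congr 1
    have h1 : (V.erase v).sup u ≤ V.sup u := Finset.sup_mono (Finset.erase_subset _ _)
    have h2 : ((W ∪ V).erase v).sup u ≤ W.sup u + (V.erase v).sup u := by
      rw [← union_erase_eq hvW, Finset.sup_union]
      exact sup_le le_self_add le_add_self
    have h3 : (W ∪ V).sup u ≤ W.sup u + V.sup u := by
      rw [Finset.sup_union]
      exact sup_le le_self_add le_add_self
    have h4 : ((W ∪ V).erase v).sup u ≤ (W ∪ V).sup u :=
      Finset.sup_mono (Finset.erase_subset _ _)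
    have hmon : (MvPolynomial.monomial (W.sup u + V.sup u - (W ∪ V).sup u) (1 : k)) *
        (MvPolynomial.monomial ((W ∪ V).sup u - ((W ∪ V).erase v).sup u) (1 : k))
        = (MvPolynomial.monomial (V.sup u - (V.erase v).sup u) (1 : k)) *
          (MvPolynomial.monomial (W.sup u + (V.erase v).sup u - ((W ∪ V).erase v).sup u) (1 : k)) := by
      rw [monomial_one_mul, monomial_one_mul]
      exact congrArg (fun e => MvPolynomial.monomial e (1 : k)) (exp_left h1 h2 h3 h4).symm
    have hsign : (-1 : MvPolynomial σ₀ k) ^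
          ((W.card + sigmaCount W V) + ((W ∪ V).filter fun x => x < v).card)
        = (-1 : MvPolynomial σ₀ k) ^
          ((V.filter fun x => x < v).card + sigmaCount W (V.erase v)) := by
      apply neg_one_pow_eq (n := W.card)
      have := sign_left hd hv
      omega
    calc ((-1 : MvPolynomial σ₀ k) ^ (W.card + sigmaCount W V) *
            MvPolynomial.monomial (W.sup u + V.sup u - (W ∪ V).sup u) (1 : k) * c) *
          ((-1 : MvPolynomial σ₀ k) ^ (((W ∪ V).filter fun x => x < v).card) *
            MvPolynomial.monomial ((W ∪ V).sup u - ((W ∪ V).erase v).sup u) (1 : k))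
        = ((-1 : MvPolynomial σ₀ k) ^
              ((W.card + sigmaCount W V) + ((W ∪ V).filter fun x => x < v).card)) *
            ((MvPolynomial.monomial (W.sup u + V.sup u - (W ∪ V).sup u) (1 : k)) *
              (MvPolynomial.monomial ((W ∪ V).sup u - ((W ∪ V).erase v).sup u) (1 : k))) * c := by
          rw [pow_add]; ring
      _ = ((-1 : MvPolynomial σ₀ k) ^
              ((V.filter fun x => x < v).card + sigmaCount W (V.erase v))) *
            ((MvPolynomial.monomial (V.sup u - (V.erase v).sup u) (1 : k)) *
              (MvPolynomial.monomial (W.sup u + (V.erase v).sup u - ((W ∪ V).erase v).sup u) (1 : k))) * c := by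
          rw [hsign, hmon]
      _ = (-1 : MvPolynomial σ₀ k) ^ ((V.filter fun x => x < v).card) *
            (c * MvPolynomial.monomial (V.sup u - (V.erase v).sup u) (1 : k) *
              ((-1 : MvPolynomial σ₀ k) ^ (sigmaCount W (V.erase v)) *
                MvPolynomial.monomial (W.sup u + (V.erase v).sup u - ((W ∪ V).erase v).sup u) (1 : k))) := by
          rw [pow_add]; ring
  · -- W part
    apply Finset.sum_congr rfl
    intro w hw
    rw [smul_smul, Finsupp.smul_single', Finsupp.smul_single', mul_one]
    refine congrArg (Finsupp.single _) ?_
    ring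

lemma leibniz_right (W V : Finset ι) (c : MvPolynomial σ₀ k) (hd : Disjoint W V) :
    (((-1 : MvPolynomial σ₀ k) ^ (sigmaCount V W) *
        MvPolynomial.monomial (W.sup u + V.sup u - (W ∪ V).sup u) (1 : k)) * c) •
        taylorD k u (W ∪ V)
    = taylorProd k u (taylorD k u V) (Finsupp.single W c)
      + ∑ w ∈ W,
          ((((-1 : MvPolynomial σ₀ k) ^ (sigmaCount V W) *
              MvPolynomial.monomial (W.sup u + V.sup u - (W ∪ V).sup u) (1 : k)) * c) *
            ((-1 : MvPolynomial σ₀ k) ^ (((W ∪ V).filter fun x => x < w).card) *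
              MvPolynomial.monomial ((W ∪ V).sup u - ((W ∪ V).erase w).sup u) (1 : k))) •
            Finsupp.single ((W ∪ V).erase w) (1 : MvPolynomial σ₀ k) := by
  classical
  rw [taylorD, taylorD, taylorProd_finset_sum_left, Finset.smul_sum, Finset.sum_union hd,
    add_comm]
  congr 1
  · -- V part
    apply Finset.sum_congr rfl
    intro v hv
    have hvW : v ∉ W := fun h => (Finset.disjoint_left.mp hd h) hv
    have hidx : (V.erase v) ∪ W = (W ∪ V).erase v := by
      rw [Finset.union_comm, union_erase_eq hvW]
    rw [taylorProd_smul_left, taylorProd_single_single, taylorMul,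
      if_pos (hd.symm.mono_left (Finset.erase_subset _ _)), hidx]
    simp only [smul_smul, Finsupp.smul_single']
    congr 1
    have h1 : (V.erase v).sup u ≤ V.sup u := Finset.sup_mono (Finset.erase_subset _ _)
    have h2 : ((W ∪ V).erase v).sup u ≤ W.sup u + (V.erase v).sup u := by
      rw [← union_erase_eq hvW, Finset.sup_union]
      exact sup_le le_self_add le_add_self
    have h3 : (W ∪ V).sup u ≤ W.sup u + V.sup u := by
      rw [Finset.sup_union]
      exact sup_le le_self_add le_add_self
    have h4 : ((W ∪ V).erase v).sup u ≤ (W ∪ V).sup u :=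
      Finset.sup_mono (Finset.erase_subset _ _)
    have hmon : (MvPolynomial.monomial (W.sup u + V.sup u - (W ∪ V).sup u) (1 : k)) *
        (MvPolynomial.monomial ((W ∪ V).sup u - ((W ∪ V).erase v).sup u) (1 : k))
        = (MvPolynomial.monomial (V.sup u - (V.erase v).sup u) (1 : k)) *
          (MvPolynomial.monomial ((V.erase v).sup u + W.sup u - ((W ∪ V).erase v).sup u) (1 : k)) := by
      rw [monomial_one_mul, monomial_one_mul]
      exact congrArg (fun e => MvPolynomial.monomial e (1 : k)) (exp_right h1 h2 h3 h4).symm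
    have hsign : (-1 : MvPolynomial σ₀ k) ^
          ((sigmaCount V W) + ((W ∪ V).filter fun x => x < v).card)
        = (-1 : MvPolynomial σ₀ k) ^
          ((V.filter fun x => x < v).card + sigmaCount (V.erase v) W) := by
      apply neg_one_pow_eq (n := (W.filter fun x => x < v).card)
      have := sign_right hd hv
      omega
    calc ((-1 : MvPolynomial σ₀ k) ^ (sigmaCount V W) *
            MvPolynomial.monomial (W.sup u + V.sup u - (W ∪ V).sup u) (1 : k) * c) *
          ((-1 : MvPolynomial σ₀ k) ^ (((W ∪ V).filter fun x => x < v).card) *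
            MvPolynomial.monomial ((W ∪ V).sup u - ((W ∪ V).erase v).sup u) (1 : k))
        = ((-1 : MvPolynomial σ₀ k) ^
              ((sigmaCount V W) + ((W ∪ V).filter fun x => x < v).card)) *
            ((MvPolynomial.monomial (W.sup u + V.sup u - (W ∪ V).sup u) (1 : k)) *
              (MvPolynomial.monomial ((W ∪ V).sup u - ((W ∪ V).erase v).sup u) (1 : k))) * c := by
          rw [pow_add]; ring
      _ = ((-1 : MvPolynomial σ₀ k) ^
              ((V.filter fun x => x < v).card + sigmaCount (V.erase v) W)) *
            ((MvPolynomial.monomial (V.sup u - (V.erase v).sup u) (1 : k)) *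
              (MvPolynomial.monomial ((V.erase v).sup u + W.sup u - ((W ∪ V).erase v).sup u) (1 : k))) * c := by
          rw [hsign, hmon]
      _ = (-1 : MvPolynomial σ₀ k) ^ ((V.filter fun x => x < v).card) *
            (MvPolynomial.monomial (V.sup u - (V.erase v).sup u) (1 : k) * c *
              ((-1 : MvPolynomial σ₀ k) ^ (sigmaCount (V.erase v) W) *
                MvPolynomial.monomial ((V.erase v).sup u + W.sup u - ((W ∪ V).erase v).sup u) (1 : k))) := by
          rw [pow_add]; ring
  · -- W part
    apply Finset.sum_congr rfl
    intro w hw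
    rw [smul_smul, Finsupp.smul_single', Finsupp.smul_single', mul_one]
    refine congrArg (Finsupp.single _) ?_
    ring

end Leib


/-- An edge of the Taylor graph: `U → V` iff `V ⊆ U`, `|U| = |V| + 1`,
`m_U = m_V` and `|V| ≥ 2`. -/
def taylorStep {ι σ₀ : Type*} [LinearOrder ι] (u : ι → (σ₀ →₀ ℕ))
    (U V : Finset ι) : Prop :=
  V ⊆ U ∧ U.card = V.card + 1 ∧ U.sup u = V.sup u ∧ 2 ≤ V.card

/-- if `A` is a Morse matching on the Taylor graph of a monomial ideal
(a set of edges, no two incident, whose reversal leaves the graph acyclic) whose set of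
sources `A₊` is closed under taking supersets, then the induced subcomplex
`J = span { e_V, ∂(e_V) : V ∈ A₊ }` is a dg ideal of the Taylor resolution:
`∂(J) ⊆ J` and `T·J ⊆ J`. -/
theorem stmt12 (k : Type*) [Field k] {ι σ₀ : Type*} [LinearOrder ι] [Fintype ι]
    (u : ι → (σ₀ →₀ ℕ)) (hu : Function.Injective u)
    (A : Set (Finset ι × Finset ι))
    (hA : ∀ p ∈ A, taylorStep u p.1 p.2)
    (hinc : ∀ p ∈ A, ∀ q ∈ A, p ≠ q →
      p.1 ≠ q.1 ∧ p.1 ≠ q.2 ∧ p.2 ≠ q.1 ∧ p.2 ≠ q.2)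
    (hacyclic : ∀ U : Finset ι,
      ¬ Relation.TransGen
        (fun U V => (taylorStep u U V ∧ (U, V) ∉ A) ∨ (V, U) ∈ A) U U)
    (Aplus : Set (Finset ι)) (hAplus : Aplus = {U | ∃ V, (U, V) ∈ A})
    (hsup : ∀ U ∈ Aplus, ∀ W : Finset ι, U ⊆ W → W ∈ Aplus)
    (Jc : Submodule (MvPolynomial σ₀ k) (Finset ι →₀ MvPolynomial σ₀ k))
    (hJc : Jc = Submodule.span (MvPolynomial σ₀ k)
      (((fun U => Finsupp.single U (1 : MvPolynomial σ₀ k)) '' Aplus) ∪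
        ((taylorD k u) '' Aplus))) :
    (∀ x ∈ Jc, taylorDiff k u x ∈ Jc) ∧
    (∀ x y : Finset ι →₀ MvPolynomial σ₀ k, y ∈ Jc →
      taylorProd k u x y ∈ Jc ∧ taylorProd k u y x ∈ Jc) := by
  classical
  subst hJc
  set S : Set (Finset ι →₀ MvPolynomial σ₀ k) :=
    ((fun U => Finsupp.single U (1 : MvPolynomial σ₀ k)) '' Aplus) ∪
      ((taylorD k u) '' Aplus) with hS
  have hgen1 : ∀ U ∈ Aplus,
      Finsupp.single U (1 : MvPolynomial σ₀ k) ∈ Submodule.span (MvPolynomial σ₀ k) S :=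
    fun U hU => Submodule.subset_span (Or.inl ⟨U, hU, rfl⟩)
  have hgen2 : ∀ U ∈ Aplus, taylorD k u U ∈ Submodule.span (MvPolynomial σ₀ k) S :=
    fun U hU => Submodule.subset_span (Or.inr ⟨U, hU, rfl⟩)
  have hsingle_mem : ∀ (U : Finset ι) (r : MvPolynomial σ₀ k), U ∈ Aplus →
      Finsupp.single U r ∈ Submodule.span (MvPolynomial σ₀ k) S := by
    intro U r hU
    have h : Finsupp.single U r = r • Finsupp.single U (1 : MvPolynomial σ₀ k) := by
      rw [Finsupp.smul_single', mul_one]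
    rw [h]
    exact Submodule.smul_mem _ _ (hgen1 U hU)
  have hmul_mem : ∀ (A B : Finset ι), (A ∪ B) ∈ Aplus →
      taylorMul k u A B ∈ Submodule.span (MvPolynomial σ₀ k) S := by
    intro A B hAB
    rw [taylorMul]
    split
    · exact hsingle_mem _ _ hAB
    · exact Submodule.zero_mem _
  have hndis : ∀ (W V : Finset ι) (v : ι), v ∈ V → ¬ Disjoint W V →
      Disjoint W (V.erase v) → v ∈ W := by
    intro W V v hv hd hd2
    rcases Finset.not_disjoint_iff.mp hd with ⟨x, hxW, hxV⟩
    by_cases hxv : x = v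
    · exact hxv ▸ hxW
    · exact absurd hd2 (Finset.not_disjoint_iff.mpr
        ⟨x, hxW, Finset.mem_erase.mpr ⟨hxv, hxV⟩⟩)
  have hunionmem : ∀ (W V : Finset ι) (v : ι), v ∈ W → V ∈ Aplus →
      (W ∪ V.erase v) ∈ Aplus := by
    intro W V v hvW hV
    apply hsup V hV
    intro x hx
    by_cases hxv : x = v
    · exact Finset.mem_union_left _ (hxv ▸ hvW)
    · exact Finset.mem_union_right _ (Finset.mem_erase.mpr ⟨hxv, hx⟩)
  have herasemem : ∀ (W V : Finset ι) (w : ι), Disjoint W V → w ∈ W → V ∈ Aplus →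
      ((W ∪ V).erase w) ∈ Aplus := by
    intro W V w hd hw hV
    apply hsup V hV
    exact Finset.subset_erase.mpr
      ⟨Finset.subset_union_right, Finset.disjoint_left.mp hd hw⟩
  have keyL : ∀ (W : Finset ι) (c : MvPolynomial σ₀ k) (y : Finset ι →₀ MvPolynomial σ₀ k),
      y ∈ Submodule.span (MvPolynomial σ₀ k) S →
      taylorProd k u (Finsupp.single W c) y ∈ Submodule.span (MvPolynomial σ₀ k) S := by
    intro W c y hy
    induction hy using Submodule.span_induction with
    | mem x hx =>
      rcases hx with ⟨V, hV, rfl⟩ | ⟨V, hV, rfl⟩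
      · rw [taylorProd_single_single]
        exact Submodule.smul_mem _ _
          (hmul_mem W V (hsup V hV _ Finset.subset_union_right))
      · by_cases hd : Disjoint W V
        · rw [eq_sub_of_add_eq (leibniz_left k u W V c hd).symm]
          apply Submodule.sub_mem
          · exact Submodule.smul_mem _ _
              (hgen2 _ (hsup V hV _ Finset.subset_union_right))
          · exact Submodule.sum_mem _ fun w hw => Submodule.smul_mem _ _
              (hgen1 _ (herasemem W V w hd hw hV))
        · rw [taylorD, taylorProd_finset_sum_right]
          apply Submodule.sum_mem
          intro v hv
          rw [taylorProd_smul_right, taylorProd_single_single]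
          apply Submodule.smul_mem
          apply Submodule.smul_mem
          by_cases hd2 : Disjoint W (V.erase v)
          · exact hmul_mem _ _ (hunionmem W V v (hndis W V v hv hd hd2) hV)
          · rw [taylorMul, if_neg hd2]
            exact Submodule.zero_mem _
    | zero =>
      rw [taylorProd_zero_right]
      exact Submodule.zero_mem _
    | add x y hx hy ihx ihy =>
      rw [taylorProd_add_right]
      exact Submodule.add_mem _ ihx ihy
    | smul a x hx ih =>
      rw [taylorProd_smul_right]
      exact Submodule.smul_mem _ _ ih
  have keyR : ∀ (W : Finset ι) (c : MvPolynomial σ₀ k) (y : Finset ι →₀ MvPolynomial σ₀ k),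
      y ∈ Submodule.span (MvPolynomial σ₀ k) S →
      taylorProd k u y (Finsupp.single W c) ∈ Submodule.span (MvPolynomial σ₀ k) S := by
    intro W c y hy
    induction hy using Submodule.span_induction with
    | mem x hx =>
      rcases hx with ⟨V, hV, rfl⟩ | ⟨V, hV, rfl⟩
      · rw [taylorProd_single_single]
        apply Submodule.smul_mem
        rw [taylorMul]
        split
        · apply hsingle_mem
          exact hsup V hV _ Finset.subset_union_left
        · exact Submodule.zero_mem _
      · by_cases hd : Disjoint W V
        · rw [eq_sub_of_add_eq (leibniz_right k u W V c hd).symm]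
          apply Submodule.sub_mem
          · exact Submodule.smul_mem _ _
              (hgen2 _ (hsup V hV _ Finset.subset_union_right))
          · exact Submodule.sum_mem _ fun w hw => Submodule.smul_mem _ _
              (hgen1 _ (herasemem W V w hd hw hV))
        · rw [taylorD, taylorProd_finset_sum_left]
          apply Submodule.sum_mem
          intro v hv
          rw [taylorProd_smul_left, taylorProd_single_single]
          apply Submodule.smul_mem
          apply Submodule.smul_mem
          by_cases hd2 : Disjoint (V.erase v) W
          · have hvW : v ∈ W := hndis W V v hv hd hd2.symm
            have : ((V.erase v) ∪ W) ∈ Aplus := by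
              have h := hunionmem W V v hvW hV
              rwa [Finset.union_comm] at h
            exact hmul_mem _ _ this
          · rw [taylorMul, if_neg hd2]
            exact Submodule.zero_mem _
    | zero =>
      rw [taylorProd_zero_left]
      exact Submodule.zero_mem _
    | add x y hx hy ihx ihy =>
      rw [taylorProd_add_left]
      exact Submodule.add_mem _ ihx ihy
    | smul a x hx ih =>
      rw [taylorProd_smul_left]
      exact Submodule.smul_mem _ _ ih
  constructor
  · intro x hx
    induction hx using Submodule.span_induction with
    | mem x hx =>
      rcases hx with ⟨V, hV, rfl⟩ | ⟨V, hV, rfl⟩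
      · rw [taylorDiff_single]
        exact Submodule.smul_mem _ _ (hgen2 V hV)
      · rw [d_squared]
        exact Submodule.zero_mem _
    | zero =>
      rw [taylorDiff_zero]
      exact Submodule.zero_mem _
    | add x y hx hy ihx ihy =>
      rw [taylorDiff_add]
      exact Submodule.add_mem _ ihx ihy
    | smul a x hx ih =>
      rw [taylorDiff_smul]
      exact Submodule.smul_mem _ _ ih
  · intro x y hy
    constructor
    · rw [taylorProd_eq_sum_left]
      exact Submodule.sum_mem _ fun V hV => keyL V (x V) y hy
    · rw [taylorProd_eq_sum_right]
      exact Submodule.sum_mem _ fun W hW => keyR W (x W) y hy
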